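/- Consider DSG-1 with parameters α_k ≥ ᾱ > 0 for all k, and assume (A0) holds. (i) If σ satisfies the property that σ(w_k) ↓ 0 implies {w_k} is bounded, strong duality M_P = M_D holds, and the dual sequence {(y_k,c_k)} generated by DSG-1 is bounded, then the dual solution set S(D) is nonempty and the dual sequence converges strongly to a dual solution. (ii) If additionally (Γ₀) holds (there exists R > 0 with r_k ≤ R σ(z_k) for all k) and {σ(z_k)}, {z_k} are bounded, then S(D) ≠ ∅ implies that the dual sequence generated by DSG-1 converges strongly to a dual solution. -/

import Mathlib

open Filter Topology Bornology

noncomputable section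

/-- A real normed space is *reflexive* if the canonical embedding into its double dual is
surjective. -/
def IsReflexiveSpace (X : Type*) [NormedAddCommGroup X] [NormedSpace ℝ X] : Prop :=
  Function.Surjective ⇑(NormedSpace.inclusionInDoubleDual ℝ X)

/-- A set is *weakly compact* if it is compact in the weak topology. -/
def WCompact {X : Type*} [NormedAddCommGroup X] [NormedSpace ℝ X] (S : Set X) : Prop :=
  IsCompact (show Set (WeakSpace ℝ X) from S)

/-- A set is *weakly open* if it is open in the weak topology. -/
def WOpen {X : Type*} [NormedAddCommGroup X] [NormedSpace ℝ X] (S : Set X) : Prop :=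
  IsOpen (show Set (WeakSpace ℝ X) from S)

/-- A set of pairs is *weakly compact* if it is compact in the product of the weak
topologies. -/
def WCompact2 {X H : Type*} [NormedAddCommGroup X] [NormedSpace ℝ X]
    [NormedAddCommGroup H] [NormedSpace ℝ H] (S : Set (X × H)) : Prop :=
  IsCompact (show Set (WeakSpace ℝ X × WeakSpace ℝ H) from S)

/-- *Weak lower semicontinuity* of an extended-real-valued function. -/
def WLsc {X : Type*} [NormedAddCommGroup X] [NormedSpace ℝ X] (g : X → EReal) : Prop :=
  LowerSemicontinuous (show WeakSpace ℝ X → EReal from g)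

/-- Weak lower semicontinuity of a function of two variables, w.r.t. the product of the
weak topologies. -/
def WLsc2 {X H : Type*} [NormedAddCommGroup X] [NormedSpace ℝ X]
    [NormedAddCommGroup H] [NormedSpace ℝ H] (g : X × H → EReal) : Prop :=
  LowerSemicontinuous (show WeakSpace ℝ X × WeakSpace ℝ H → EReal from g)

/-- Weak upper semicontinuity of a real-valued function. -/
def WUsc {X : Type*} [NormedAddCommGroup X] [NormedSpace ℝ X] (g : X → ℝ) : Prop :=
  UpperSemicontinuous (show WeakSpace ℝ X → ℝ from g)

/-- Weak (sequential) convergence of a sequence: `L (u n) → L l` for every continuous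
linear functional `L`. -/
def WSeqConv {X : Type*} [NormedAddCommGroup X] [NormedSpace ℝ X] (u : ℕ → X) (l : X) : Prop :=
  ∀ L : StrongDual ℝ X, Tendsto (fun n => L (u n)) atTop (𝓝 (L l))

/-- Weak level-compactness of a dualizing parameterization `f`. -/
def WLevelCompact {X H : Type*} [NormedAddCommGroup X] [NormedSpace ℝ X]
    [NormedAddCommGroup H] [NormedSpace ℝ H] (f : X → H → EReal) : Prop :=
  ∀ (z₀ : H) (α : ℝ), ∃ U : Set H, WOpen U ∧ z₀ ∈ U ∧
    ∃ B : Set X, WCompact B ∧ ∀ z ∈ U, {x : X | f x z ≤ (α : EReal)} ⊆ B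

section Lagrangian

variable {X H : Type*} [NormedAddCommGroup H] [InnerProductSpace ℝ H]

/-- The augmented Lagrangian integrand `(x,z) ↦ f(x,z) − ⟨A z, y⟩ + c σ(z)`. -/
def lagr (f : X → H → EReal) (σ : H → EReal) (A : H → H) (y : H) (c : ℝ) (x : X) (z : H) :
    EReal :=
  f x z - ((inner ℝ (A z) y : ℝ) : EReal) + (c : EReal) * σ z

/-- The dual function `q(y,c) = inf_{x,z} (f(x,z) − ⟨A z, y⟩ + c σ(z))`. -/
def dualq (f : X → H → EReal) (σ : H → EReal) (A : H → H) (y : H) (c : ℝ) : EReal :=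
  ⨅ (x : X) (z : H), lagr f σ A y c x z

/-- The dual optimal value `M_D = sup_{(y,c) ∈ H × ℝ₊} q(y,c)`. -/
def MD (f : X → H → EReal) (σ : H → EReal) (A : H → H) : EReal :=
  ⨆ (y : H) (c : ℝ) (_ : 0 ≤ c), dualq f σ A y c

/-- `(y,c)` is a solution of the dual problem. -/
def DualSol (f : X → H → EReal) (σ : H → EReal) (A : H → H) (y : H) (c : ℝ) : Prop :=
  0 ≤ c ∧ ∀ (y' : H) (c' : ℝ), 0 ≤ c' → dualq f σ A y' c' ≤ dualq f σ A y c

/-- The function `γ_n(z) = β(z) − ⟨A z, ȳ⟩ + n σ(z)`, where `β(z) = inf_x f(x,z)`. -/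
def gam (f : X → H → EReal) (σ : H → EReal) (A : H → H) (ybar : H) (n : ℕ) (z : H) : EReal :=
  (⨅ x : X, f x z) - ((inner ℝ (A z) ybar : ℝ) : EReal) + (n : EReal) * σ z

end Lagrangian

/-- The primal optimal value `M_P = inf_x φ(x)`. -/
def MP {X : Type*} (φ : X → EReal) : EReal := ⨅ x, φ x


section AuxTop
variable {α β γ : Type*} [TopologicalSpace β] [TopologicalSpace γ]

lemma aux_clusterPt_prod {F : Filter α} [F.NeBot] {u : α → β} {v : α → γ} {a : β} {b : γ}
    (hu : ClusterPt a (map u F)) (hv : Tendsto v F (𝓝 b)) :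
    ClusterPt (a, b) (map (fun k => (u k, v k)) F) := by
  rw [clusterPt_iff_nonempty] at hu ⊢
  intro U hU V hV
  rw [nhds_prod_eq] at hU
  obtain ⟨s1, hs1, s2, hs2, hsub⟩ := Filter.mem_prod_iff.mp hU
  have hW : {k | (u k, v k) ∈ V} ∈ F := mem_map.mp hV
  have hW2 : ({k | (u k, v k) ∈ V} ∩ v ⁻¹' s2) ∈ F := inter_mem hW (hv hs2)
  obtain ⟨p, hp1, k, hk, rfl⟩ := hu hs1 (image_mem_map hW2)
  exact ⟨(u k, v k), hsub ⟨hp1, hk.2⟩, hk.1⟩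

lemma aux_lsc_clusterPt {F : Filter α} [F.NeBot] {u : α → β} {p : β} {g : β → EReal}
    {cst : EReal} (hcp : ClusterPt p (map u F)) (hg : LowerSemicontinuousAt g p)
    (hev : ∀ᶠ k in F, g (u k) ≤ cst) : g p ≤ cst := by
  by_contra h
  push_neg at h
  have h2 : {x | cst < g x} ∈ 𝓝 p := hg cst h
  rw [clusterPt_iff_nonempty] at hcp
  obtain ⟨q, hq1, k, hk, rfl⟩ := hcp h2 (image_mem_map hev)
  exact (not_lt.mpr hk) (Set.mem_setOf_eq ▸ hq1)

lemma aux_tendsto_unique {s : Set β} (hs : IsCompact s)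
    {l : Filter β} [l.NeBot] (hls : l ≤ 𝓟 s) {b : β}
    (huniq : ∀ a ∈ s, ClusterPt a l → a = b) : l ≤ 𝓝 b := by
  intro U hU
  by_contra hUl
  have h1 : (l ⊓ 𝓟 (interior U)ᶜ) ≠ ⊥ := by
    rw [ne_eq, inf_principal_eq_bot, compl_compl]
    intro h; exact hUl (mem_of_superset h interior_subset)
  haveI : (l ⊓ 𝓟 (interior U)ᶜ).NeBot := ⟨h1⟩
  obtain ⟨a, ha_s, ha⟩ := hs.exists_clusterPt (f := l ⊓ 𝓟 (interior U)ᶜ) (le_trans inf_le_left hls)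
  have hab := huniq a ha_s (ha.mono inf_le_left)
  have h2 : ClusterPt a (𝓟 (interior U)ᶜ) := ha.mono inf_le_right
  rw [← mem_closure_iff_clusterPt, IsClosed.closure_eq (isOpen_interior.isClosed_compl)] at h2
  exact h2 (hab ▸ mem_interior_iff_mem_nhds.mpr hU)

end AuxTop

lemma aux_ball_wcompact {H : Type*} [NormedAddCommGroup H] [InnerProductSpace ℝ H]
    [CompleteSpace H] (R : ℝ) :
    IsCompact (show Set (WeakSpace ℝ H) from (Metric.closedBall (0 : H) R : Set H)) := by
  classical
  have hc : IsCompact (WeakDual.toStrongDual ⁻¹'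
      Metric.closedBall (0 : StrongDual ℝ H) R : Set (WeakDual ℝ H)) :=
    WeakDual.isCompact_closedBall (𝕜 := ℝ) (E := H) 0 R
  set D := InnerProductSpace.toDual ℝ H with hD
  let Φ : WeakDual ℝ H → WeakSpace ℝ H := fun w => D.symm w
  have hΦ : Continuous Φ := by
    apply WeakBilin.continuous_of_continuous_eval
    intro L
    have hrw : (fun w : WeakDual ℝ H => ((topDualPairing ℝ H).flip (Φ w)) L)
        = fun w : WeakDual ℝ H => w (D.symm L) := by
      funext w
      show L (D.symm w) = w (D.symm L)
      rw [← InnerProductSpace.toDual_symm_apply (𝕜 := ℝ), real_inner_comm]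
      exact InnerProductSpace.toDual_symm_apply
    rw [hrw]
    exact WeakDual.eval_continuous _
  have himg : (show Set (WeakSpace ℝ H) from (Metric.closedBall (0 : H) R : Set H))
      = Φ '' (WeakDual.toStrongDual ⁻¹' Metric.closedBall (0 : StrongDual ℝ H) R) := by
    ext h
    constructor
    · intro hh
      have hh' : ‖(show H from h)‖ ≤ R := by
        exact mem_closedBall_zero_iff.mp
          (show (show H from h) ∈ Metric.closedBall (0 : H) R from hh)
      refine ⟨(show WeakDual ℝ H from D (show H from h)), ?_, ?_⟩
      · show (D (show H from h)) ∈ Metric.closedBall (0 : StrongDual ℝ H) R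
        rw [Metric.mem_closedBall, dist_zero_right, D.norm_map]
        exact hh'
      · show D.symm (D (show H from h)) = h
        exact D.symm_apply_apply _
    · rintro ⟨w, hw, rfl⟩
      have hw' : ‖WeakDual.toStrongDual w‖ ≤ R := by
        simpa [Metric.mem_closedBall, dist_zero_right] using hw
      show dist (show H from Φ w) (0 : H) ≤ R
      rw [dist_zero_right]
      show ‖D.symm (show StrongDual ℝ H from w)‖ ≤ R
      rw [D.symm.norm_map]
      exact hw'
  rw [himg]
  exact hc.image hΦ

section AuxLagr
variable {X H : Type*} [NormedAddCommGroup H] [InnerProductSpace ℝ H]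

lemma aux_lagr_coe (f : X → H → EReal) (σ : H → EReal) (A : H → H) {x : X} {z : H} {fv sv : ℝ}
    (hf : f x z = (fv : EReal)) (hσ : σ z = (sv : EReal)) (y : H) (c : ℝ) :
    lagr f σ A y c x z = ((fv - inner ℝ (A z) y + c * sv : ℝ) : EReal) := by
  rw [lagr, hf, hσ, ← EReal.coe_mul, ← EReal.coe_sub, ← EReal.coe_add]

lemma aux_dualq_le (f : X → H → EReal) (σ : H → EReal) (A : H → H) (y : H) (c : ℝ)
    (x : X) (z : H) : dualq f σ A y c ≤ lagr f σ A y c x z := by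
  unfold dualq; exact (iInf_le _ x).trans (iInf_le _ z)

lemma aux_weak_duality (φ : X → EReal) (f : X → H → EReal) (σ : H → EReal) (A : H → H)
    (hdual : ∀ x, f x 0 = φ x) (hσ0 : σ 0 = 0) (hA00 : A 0 = 0) (y : H) (c : ℝ) :
    dualq f σ A y c ≤ MP φ := by
  rw [MP]
  refine le_iInf fun x0 => ?_
  refine (aux_dualq_le f σ A y c x0 0).trans ?_
  rw [lagr, hdual, hσ0, hA00, inner_zero_left]
  simp

lemma aux_usc_dualq (f : X → H → EReal) (σ : H → EReal) (A : H → H)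
    (hσpos : ∀ z, 0 ≤ σ z) (hfbot : ∀ x z, f x z ≠ ⊥)
    {yl : H} {cl : ℝ} (hcl : 0 < cl) {b : EReal}
    (hb : dualq f σ A yl cl < b) :
    ∀ᶠ p : H × ℝ in 𝓝 (yl, cl), dualq f σ A p.1 p.2 < b := by
  obtain ⟨x, hx⟩ := iInf_lt_iff.mp hb
  obtain ⟨z, hxz⟩ := iInf_lt_iff.mp hx
  have hσb : σ z ≠ ⊥ := fun h => absurd (h ▸ hσpos z) (by simp)
  have hmul_ne_bot : (cl : EReal) * σ z ≠ ⊥ := by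
    rcases (hσpos z).eq_or_lt with h | h
    · rw [← h, mul_zero]; exact EReal.zero_ne_bot
    · exact ne_bot_of_gt (EReal.mul_pos (by exact_mod_cast hcl) h)
  have hft : f x z ≠ ⊤ := by
    intro h
    rw [lagr, h, EReal.top_sub_coe, EReal.top_add_of_ne_bot hmul_ne_bot] at hxz
    exact not_top_lt hxz
  obtain ⟨fv, hfv⟩ : ∃ fv : ℝ, f x z = (fv : EReal) :=
    ⟨(f x z).toReal, (EReal.coe_toReal hft (hfbot x z)).symm⟩
  have hst : σ z ≠ ⊤ := by
    intro h
    rw [lagr, hfv, h, EReal.coe_mul_top_of_pos hcl, ← EReal.coe_sub,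
      EReal.add_top_of_ne_bot (EReal.coe_ne_bot _)] at hxz
    exact not_top_lt hxz
  obtain ⟨sv, hsv⟩ : ∃ sv : ℝ, σ z = (sv : EReal) :=
    ⟨(σ z).toReal, (EReal.coe_toReal hst hσb).symm⟩
  have hcont : Continuous fun p : H × ℝ =>
      ((fv - inner ℝ (A z) p.1 + p.2 * sv : ℝ) : EReal) := by
    apply continuous_coe_real_ereal.comp
    exact ((continuous_const.sub ((continuous_const).inner continuous_fst)).add
      (continuous_snd.mul continuous_const))
  have h0 : ((fv - inner ℝ (A z) yl + cl * sv : ℝ) : EReal) < b := by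
    rw [← aux_lagr_coe f σ A hfv hsv yl cl]; exact hxz
  have hev : ∀ᶠ p : H × ℝ in 𝓝 (yl, cl),
      ((fv - inner ℝ (A z) p.1 + p.2 * sv : ℝ) : EReal) < b :=
    eventually_of_mem (((isOpen_Iio (a := b)).preimage hcont).mem_nhds h0) fun p hp => hp
  refine hev.mono fun p hp => ?_
  exact (aux_dualq_le f σ A p.1 p.2 x z).trans_lt
    (by rw [aux_lagr_coe f σ A hfv hsv p.1 p.2]; exact hp)

end AuxLagr

lemma aux_core {X H : Type*} [NormedAddCommGroup X] [NormedSpace ℝ X]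
    [NormedAddCommGroup H] [InnerProductSpace ℝ H]
    (φ : X → EReal) (f : X → H → EReal)
    (hdual : ∀ x, f x 0 = φ x)
    (hflsc : WLsc2 fun p : X × H => f p.1 p.2)
    (hflev : WLevelCompact f)
    (x : ℕ → X) (z : ℕ → H)
    (F : Filter ℕ) [F.NeBot]
    {μ : ℝ} (hμ : (μ : EReal) < MP φ)
    (hev : ∀ᶠ k in F, f (x k) (z k) ≤ (μ : EReal))
    (hzw : Tendsto (fun k => toWeakSpaceCLM ℝ H (z k)) F (𝓝 0)) : False := by
  obtain ⟨U, hUo, h0U, B, hBc, hlev⟩ := hflev 0 μ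
  have hzU : ∀ᶠ k in F, toWeakSpaceCLM ℝ H (z k) ∈ (show Set (WeakSpace ℝ H) from U) :=
    hzw.eventually (eventually_of_mem (hUo.mem_nhds (show (0:H) ∈ U from h0U)) fun w hw => hw)
  have hxB : ∀ᶠ k in F, x k ∈ B := by
    filter_upwards [hzU, hev] with k h1 h2
    exact hlev (z k) h1 h2
  have hmap : map (fun k => toWeakSpaceCLM ℝ X (x k)) F
      ≤ 𝓟 (show Set (WeakSpace ℝ X) from B) :=
    le_principal_iff.mpr (mem_map.mpr hxB)
  obtain ⟨xb, hxbB, hcl⟩ := hBc.exists_clusterPt hmap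
  have hpair : ClusterPt (xb, (0 : WeakSpace ℝ H))
      (map (fun k => (toWeakSpaceCLM ℝ X (x k), toWeakSpaceCLM ℝ H (z k))) F) :=
    aux_clusterPt_prod hcl hzw
  have hf0 : f xb 0 ≤ (μ : EReal) := by
    have h := aux_lsc_clusterPt
      (g := (show WeakSpace ℝ X × WeakSpace ℝ H → EReal from fun p : X × H => f p.1 p.2))
      (u := fun k => (toWeakSpaceCLM ℝ X (x k), toWeakSpaceCLM ℝ H (z k)))
      (cst := (μ : EReal)) hpair (hflsc (xb, (0 : WeakSpace ℝ H)))
      (hev.mono fun k hk => hk)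
    exact h
  have hMP : MP φ ≤ (μ : EReal) := by
    rw [MP]
    exact (iInf_le _ xb).trans (le_of_eq_of_le (hdual xb).symm hf0)
  exact absurd hμ (not_lt.mpr hMP)

set_option maxHeartbeats 2000000 in
/-- Strong dual convergence of DSG-1. (i) If `σ(w_k) ↓ 0` implies
boundedness of `{w_k}`, strong duality holds and the dual sequence is bounded, then the
dual solution set is nonempty and the dual sequence converges strongly to a dual
solution. (ii) If additionally `(Γ₀)` holds and `{σ(z_k)}`, `{z_k}` are bounded, then
nonemptiness of the dual solution set implies strong convergence of the dual sequence to
a dual solution. -/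
theorem dsg1_dual_strong_convergence
    {X H : Type*} [NormedAddCommGroup X] [NormedSpace ℝ X] [CompleteSpace X]
    [NormedAddCommGroup H] [InnerProductSpace ℝ H] [CompleteSpace H]
    (hrefl : IsReflexiveSpace X)
    (φ : X → EReal)
    (hφproper : (∀ x, φ x ≠ ⊥) ∧ (∃ x, φ x ≠ ⊤))
    (hφwlsc : WLsc φ)
    (hφlev : ∀ α : ℝ, WCompact {x : X | φ x ≤ (α : EReal)})
    (f : X → H → EReal)
    (hdual : ∀ x, f x 0 = φ x)
    (hfproper : (∀ x z, f x z ≠ ⊥) ∧ (∃ x z, f x z ≠ ⊤))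
    (hflsc : WLsc2 fun p : X × H => f p.1 p.2)
    (hflev : WLevelCompact f)
    (σ : H → EReal)
    (hσpos : ∀ z, 0 ≤ σ z)
    (hσ0 : σ 0 = 0)
    (hσargmin : ∀ z, σ z = 0 → z = 0)
    (hσwlsc : WLsc σ)
    (A : H → H)
    (hA0 : ∀ z, (‖A z‖ : EReal) ≤ σ z)
    (hA1 : ∀ y : H, WUsc fun z => (inner ℝ (A z) y : ℝ))
    (x : ℕ → X) (z y : ℕ → H) (c st a r σz : ℕ → ℝ)
    (hσz : ∀ k, (σz k : EReal) = σ (z k))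
    (abar : ℝ) (habar : 0 < abar) (ha : ∀ k, 0 < a k ∧ a k < abar)
    (hst : ∀ k, 0 < st k)
    (hrpos : ∀ k, 0 ≤ r k) (hrlim : Tendsto r atTop (𝓝 0))
    (hc0 : 0 ≤ c 0) (hq0 : dualq f σ A (y 0) (c 0) ≠ ⊥)
    (hxz : ∀ k, lagr f σ A (y k) (c k) (x k) (z k) ≤ dualq f σ A (y k) (c k) + (r k : EReal))
    (hy : ∀ k, y (k + 1) = y k - st k • A (z k))
    (hc : ∀ k, c (k + 1) = c k + (a k + 1) * st k * σz k)
    (η βs : ℝ) (hηpos : 0 < η) (hηβ : η < βs)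
    (hstep : ∀ k, min η (‖A (z k)‖ + ‖z k‖) ≤ st k ∧ st k ≤ max βs (σz k + ‖z k‖))
    (ab : ℝ) (hab : 0 < ab) (halb : ∀ k, ab ≤ a k)
    (hz : ∀ k, z k ≠ 0) :
    ((∀ w : ℕ → H, Antitone (fun k => σ (w k)) →
        Tendsto (fun k => σ (w k)) atTop (𝓝 (0 : EReal)) → ∃ M : ℝ, ∀ k, ‖w k‖ ≤ M) →
      MP φ = MD f σ A →
      (∃ M : ℝ, ∀ k, ‖y k‖ + |c k| ≤ M) →
      ∃ (yl : H) (cl : ℝ), DualSol f σ A yl cl ∧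
        Tendsto y atTop (𝓝 yl) ∧ Tendsto c atTop (𝓝 cl)) ∧
    ((∀ w : ℕ → H, Antitone (fun k => σ (w k)) →
        Tendsto (fun k => σ (w k)) atTop (𝓝 (0 : EReal)) → ∃ M : ℝ, ∀ k, ‖w k‖ ≤ M) →
      MP φ = MD f σ A →
      (∃ R : ℝ, 0 < R ∧ ∀ k, r k ≤ R * σz k) →
      (∃ M : ℝ, ∀ k, σz k ≤ M) → (∃ M : ℝ, ∀ k, ‖z k‖ ≤ M) →
      (∃ (yd : H) (cd : ℝ), DualSol f σ A yd cd) →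
      ∃ (yl : H) (cl : ℝ), DualSol f σ A yl cl ∧
        Tendsto y atTop (𝓝 yl) ∧ Tendsto c atTop (𝓝 cl)) := by

  classical
  -- basic consequences
  have hfbot := hfproper.1
  have hA00 : A 0 = 0 := by
    have h := hA0 0
    rw [hσ0] at h
    have h2 : ‖A 0‖ ≤ (0 : ℝ) := by exact_mod_cast h
    simpa using norm_le_zero_iff.mp h2
  have hMPtop : MP φ < ⊤ := by
    obtain ⟨x₀, hx₀⟩ := hφproper.2
    exact lt_of_le_of_lt (iInf_le _ x₀) hx₀.lt_top
  have hwd : ∀ y' c', dualq f σ A y' c' ≤ MP φ := fun y' c' =>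
    aux_weak_duality φ f σ A hdual hσ0 hA00 y' c'
  have hσzpos : ∀ k, 0 < σz k := by
    intro k
    have h0 : (0 : EReal) ≤ (σz k : EReal) := by rw [hσz k]; exact hσpos (z k)
    have h1 : (0 : ℝ) ≤ σz k := by exact_mod_cast h0
    rcases h1.eq_or_lt with h | h
    · exfalso
      apply hz k
      apply hσargmin
      rw [← hσz k, ← h]
      exact rfl
    · exact h
  have hinc : ∀ k, 0 < (a k + 1) * st k * σz k := fun k =>
    mul_pos (mul_pos (by linarith [(ha k).1]) (hst k)) (hσzpos k)
  have hcmono : Monotone c := monotone_nat_of_le_succ fun k => by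
    rw [hc k]; linarith [hinc k]
  have hcpos : ∀ k, 0 ≤ c k := fun k => hc0.trans (hcmono (Nat.zero_le k))
  have hqtop : ∀ k, dualq f σ A (y k) (c k) ≠ ⊤ := fun k =>
    ((hwd (y k) (c k)).trans_lt hMPtop).ne
  have hlagr_lt : ∀ k, lagr f σ A (y k) (c k) (x k) (z k) < ⊤ := fun k =>
    (hxz k).trans_lt (EReal.add_lt_top (hqtop k) (EReal.coe_ne_top _))
  have hfk_top : ∀ k, f (x k) (z k) ≠ ⊤ := by
    intro k h
    have h2 := hlagr_lt k
    rw [lagr, h, EReal.top_sub_coe, ← hσz k, ← EReal.coe_mul,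
      EReal.top_add_of_ne_bot (EReal.coe_ne_bot _)] at h2
    exact absurd h2 (lt_irrefl _)
  set fk : ℕ → ℝ := fun k => (f (x k) (z k)).toReal with hfk_def
  have hfk : ∀ k, f (x k) (z k) = ((fk k : ℝ) : EReal) := fun k =>
    (EReal.coe_toReal (hfk_top k) (hfbot (x k) (z k))).symm
  have hlagrc : ∀ (k : ℕ) (y' : H) (c' : ℝ), lagr f σ A y' c' (x k) (z k)
      = ((fk k - inner ℝ (A (z k)) y' + c' * σz k : ℝ) : EReal) := fun k y' c' =>
    aux_lagr_coe f σ A (hfk k) (hσz k).symm y' c'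
  have hqbot : ∀ k, dualq f σ A (y k) (c k) ≠ ⊥ := by
    intro k h
    have h2 := hxz k
    rw [h, EReal.bot_add, le_bot_iff, hlagrc k] at h2
    exact EReal.coe_ne_bot _ h2
  set qk : ℕ → ℝ := fun k => (dualq f σ A (y k) (c k)).toReal with hqk_def
  have hqk : ∀ k, dualq f σ A (y k) (c k) = ((qk k : ℝ) : EReal) := fun k =>
    (EReal.coe_toReal (hqtop k) (hqbot k)).symm
  have hxzr : ∀ k, fk k - inner ℝ (A (z k)) (y k) + c k * σz k ≤ qk k + r k := by
    intro k
    have h2 := hxz k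
    rw [hlagrc k, hqk k, ← EReal.coe_add] at h2
    exact_mod_cast h2
  have hAzn : ∀ k, ‖A (z k)‖ ≤ σz k := by
    intro k
    have h := hA0 (z k)
    rw [← hσz k] at h
    exact_mod_cast h
  -- the main argument, given boundedness of the dual sequence
  have key : (∀ w : ℕ → H, Antitone (fun k => σ (w k)) →
        Tendsto (fun k => σ (w k)) atTop (𝓝 (0 : EReal)) → ∃ M : ℝ, ∀ k, ‖w k‖ ≤ M) →
      (∃ M : ℝ, ∀ k, ‖y k‖ + |c k| ≤ M) →
      ∃ (yl : H) (cl : ℝ), DualSol f σ A yl cl ∧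
        Tendsto y atTop (𝓝 yl) ∧ Tendsto c atTop (𝓝 cl) := by
    rintro hP ⟨M, hM⟩
    have hyM : ∀ k, ‖y k‖ ≤ M := fun k =>
      le_trans (le_add_of_nonneg_right (abs_nonneg _)) (hM k)
    have hbdd : BddAbove (Set.range c) := by
      refine ⟨M, ?_⟩
      rintro _ ⟨k, rfl⟩
      exact (le_abs_self _).trans (le_trans (le_add_of_nonneg_left (norm_nonneg _)) (hM k))
    set cl := ⨆ k, c k with hcl_def
    have htc : Tendsto c atTop (𝓝 cl) := tendsto_atTop_ciSup hcmono hbdd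
    have hcle : ∀ k, c k ≤ cl := fun k => le_ciSup hbdd k
    have htsum : ∀ K, ∑ j ∈ Finset.range K, st j * σz j ≤ cl - c 0 := by
      intro K
      have h1 : ∑ j ∈ Finset.range K, st j * σz j
          ≤ ∑ j ∈ Finset.range K, (c (j + 1) - c j) := by
        apply Finset.sum_le_sum
        intro j _
        rw [hc j]
        nlinarith [mul_pos (hst j) (hσzpos j), (ha j).1]
      rw [Finset.sum_range_sub c] at h1
      linarith [hcle K]
    have hsummable : Summable (fun k => st k * σz k) :=
      summable_of_sum_range_le (fun k => (mul_pos (hst k) (hσzpos k)).le) htsum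
    have hdist : ∀ k, dist (y k) (y (k + 1)) ≤ st k * σz k := by
      intro k
      rw [dist_eq_norm, hy k, sub_sub_cancel, norm_smul, Real.norm_eq_abs,
        abs_of_pos (hst k)]
      exact mul_le_mul_of_nonneg_left (hAzn k) (hst k).le
    have hcauchy : CauchySeq y := cauchySeq_of_summable_dist
      (Summable.of_nonneg_of_le (fun k => dist_nonneg) hdist hsummable)
    obtain ⟨yl, hty⟩ := cauchySeq_tendsto_of_complete hcauchy
    have hcl_pos : 0 < cl := by
      have h1 : 0 < c 1 := by rw [hc 0]; linarith [hinc 0]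
      exact h1.trans_le (hcle 1)
    have hMPle : MP φ ≤ dualq f σ A yl cl := by

      by_contra hcon
      push_neg at hcon
      obtain ⟨μ', hμ'1, hμ'2⟩ := EReal.exists_between_coe_real hcon
      obtain ⟨μ'', hμ''1, hμ''2⟩ := EReal.exists_between_coe_real hμ'2
      have hμlt : μ' < μ'' := by exact_mod_cast hμ''1
      have husc := aux_usc_dualq f σ A hσpos hfbot hcl_pos hμ'1
      have hpairT : Tendsto (fun k => (y k, c k)) atTop (𝓝 (yl, cl)) :=
        hty.prodMk_nhds htc
      have hqev : ∀ᶠ k in atTop, dualq f σ A (y k) (c k) < (μ' : EReal) :=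
        hpairT.eventually husc
      have hfkev : ∀ᶠ k in atTop, fk k ≤ μ' + r k + ‖A (z k)‖ * M := by
        filter_upwards [hqev] with k hk
        have h1 : qk k < μ' := by
          rw [hqk k] at hk
          exact_mod_cast hk
        have h2 := hxzr k
        have h3 : inner ℝ (A (z k)) (y k) ≤ ‖A (z k)‖ * M :=
          (real_inner_le_norm _ _).trans (mul_le_mul_of_nonneg_left (hyM k) (norm_nonneg _))
        have h4 : 0 ≤ c k * σz k := mul_nonneg (hcpos k) (hσzpos k).le
        linarith
      -- a finishing move, given a suitable subfilter
      have finish : ∀ F : Filter ℕ, F.NeBot → F ≤ atTop →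
          Tendsto (fun k => ‖A (z k)‖) F (𝓝 0) →
          Tendsto (fun k => toWeakSpaceCLM ℝ H (z k)) F (𝓝 0) → False := by
        intro F hne hle hAz hzw
        haveI := hne
        have h4 : Tendsto (fun k => μ' + r k + ‖A (z k)‖ * M) F (𝓝 (μ' + 0 + 0 * M)) :=
          ((tendsto_const_nhds.add (hrlim.mono_left hle)).add (hAz.mul tendsto_const_nhds))
        have h5 : ∀ᶠ k in F, μ' + r k + ‖A (z k)‖ * M < μ'' :=
          h4.eventually_lt_const (by linarith)
        have hev2 : ∀ᶠ k in F, f (x k) (z k) ≤ (μ'' : EReal) := by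
          filter_upwards [hfkev.filter_mono hle, h5] with k hk1 hk2
          rw [hfk k]
          exact_mod_cast (hk1.trans hk2.le)
        exact aux_core φ f hdual hflsc hflev x z F hμ''2 hev2 hzw
      -- the case where σz → 0 along an infinite index set
      have hneS : ∀ S : Set ℕ, S.Infinite → (atTop ⊓ 𝓟 S).NeBot := by
        intro S hS
        rw [Filter.inf_principal_neBot_iff]
        intro U hU
        obtain ⟨N, hN⟩ := mem_atTop_sets.mp hU
        obtain ⟨k, hkS, hk⟩ := hS.exists_gt N
        exact ⟨k, hN k hk.le, hkS⟩
      have caseS : ∀ S : Set ℕ, S.Infinite → Tendsto σz (atTop ⊓ 𝓟 S) (𝓝 0) → False := by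
        intro S hSinf hσS
        have hex : ∀ N : ℕ, ∀ ε : ℝ, 0 < ε → ∃ k, k ∈ S ∧ N ≤ k ∧ σz k < ε := by
          intro N ε hε
          have h1 : ∀ᶠ k in atTop ⊓ 𝓟 S, σz k < ε := hσS.eventually_lt_const hε
          rw [eventually_inf_principal] at h1
          obtain ⟨N₀, hN₀⟩ := eventually_atTop.mp h1
          obtain ⟨k, hkS, hk⟩ := hSinf.exists_gt (max N N₀)
          exact ⟨k, hkS, le_of_lt (lt_of_le_of_lt (le_max_left _ _) hk),
            hN₀ k (le_of_lt (lt_of_le_of_lt (le_max_right _ _) hk)) hkS⟩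
        choose K hKS hKge hKlt using hex
        let g : ℕ → ℕ := fun n =>
          Nat.rec (K 0 1 one_pos) (fun _ p => K (p + 1) (σz p) (hσzpos p)) n
        have hgS : ∀ n, g n ∈ S := by
          intro n
          cases n with
          | zero => exact hKS 0 1 one_pos
          | succ m => exact hKS _ _ _
        have hgmono : StrictMono g := strictMono_nat_of_lt_succ fun n =>
          lt_of_lt_of_le (Nat.lt_succ_self _) (hKge (g n + 1) (σz (g n)) (hσzpos (g n)))
        have hgdec : ∀ n, σz (g (n + 1)) < σz (g n) := fun n =>
          hKlt (g n + 1) (σz (g n)) (hσzpos (g n))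
        have hgtop : Tendsto g atTop atTop :=
          tendsto_atTop_mono (fun n => hgmono.le_apply) tendsto_id
        set F := Filter.map g atTop with hF_def
        haveI : F.NeBot := map_neBot
        have hFle : F ≤ atTop := hgtop
        have hginf : Tendsto g atTop (atTop ⊓ 𝓟 S) :=
          tendsto_inf.mpr ⟨hgtop, tendsto_principal.mpr (Eventually.of_forall hgS)⟩
        have hσg : Tendsto (fun n => σz (g n)) atTop (𝓝 0) := hσS.comp hginf
        have hσF : Tendsto σz F (𝓝 0) := by
          rw [hF_def, Filter.tendsto_map'_iff]
          exact hσg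
        have hanti : Antitone (fun n => σ (z (g n))) := antitone_nat_of_succ_le fun n => by
          rw [← hσz, ← hσz]
          exact_mod_cast (hgdec n).le
        have htend : Tendsto (fun n => σ (z (g n))) atTop (𝓝 (0 : EReal)) := by
          have h1 : Tendsto (fun n => ((σz (g n) : ℝ) : EReal)) atTop (𝓝 ((0 : ℝ) : EReal)) :=
            EReal.tendsto_coe.mpr hσg
          simpa [hσz] using h1
        obtain ⟨Mz, hMz⟩ := hP (fun n => z (g n)) hanti htend
        have hKcomp := aux_ball_wcompact (H := H) Mz
        have hmapz : map (fun k => toWeakSpaceCLM ℝ H (z k)) F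
            ≤ 𝓟 (show Set (WeakSpace ℝ H) from (Metric.closedBall (0 : H) Mz : Set H)) := by
          rw [le_principal_iff, hF_def, mem_map, mem_map]
          refine eventually_atTop.mpr ⟨0, fun n _ => ?_⟩
          show z (g n) ∈ Metric.closedBall (0 : H) Mz
          simpa [Metric.mem_closedBall, dist_zero_right] using hMz n
        haveI : (map (fun k => toWeakSpaceCLM ℝ H (z k)) F).NeBot := map_neBot
        have huniq : ∀ w ∈ (show Set (WeakSpace ℝ H) from (Metric.closedBall (0 : H) Mz : Set H)),
            ClusterPt w (map (fun k => toWeakSpaceCLM ℝ H (z k)) F)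
            → w = (0 : WeakSpace ℝ H) := by
          intro w _ hcw
          have hσle : ∀ ε : ℝ, 0 < ε → σ w ≤ (ε : EReal) := by
            intro ε hε
            refine aux_lsc_clusterPt (g := (show WeakSpace ℝ H → EReal from σ))
              (u := fun k => toWeakSpaceCLM ℝ H (z k)) (cst := (ε : EReal)) hcw (hσwlsc w) ?_
            have h6 : ∀ᶠ k in F, σz k < ε := hσF.eventually_lt_const hε
            filter_upwards [h6] with k hk
            show σ (z k) ≤ (ε : EReal)
            rw [← hσz k]
            exact_mod_cast hk.le
          have hσw0 : σ w ≤ 0 := by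
            by_contra h7
            push_neg at h7
            obtain ⟨ε, hε1, hε2⟩ := EReal.exists_between_coe_real h7
            exact absurd (hσle ε (by exact_mod_cast hε1)) (not_le.mpr hε2)
          have : σ w = 0 := le_antisymm hσw0 (hσpos w)
          exact hσargmin w this
        have hzw0 : Tendsto (fun k => toWeakSpaceCLM ℝ H (z k)) F (𝓝 (0 : WeakSpace ℝ H)) :=
          aux_tendsto_unique hKcomp hmapz huniq
        have hAzF : Tendsto (fun k => ‖A (z k)‖) F (𝓝 0) :=
          squeeze_zero (fun k => norm_nonneg _) hAzn hσF
        exact finish F ‹_› hFle hAzF hzw0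
      -- split the indices into three classes
      have hm0 : Tendsto (fun k => st k * σz k) atTop (𝓝 0) := hsummable.tendsto_atTop_zero
      have hmin0 : Tendsto (fun k => min η (‖A (z k)‖ + ‖z k‖) * σz k) atTop (𝓝 0) := by
        refine squeeze_zero (fun k => ?_) (fun k => ?_) hm0
        · exact mul_nonneg (le_min hηpos.le (by positivity)) (hσzpos k).le
        · exact mul_le_mul_of_nonneg_right (hstep k).1 (hσzpos k).le
      set I1 : Set ℕ := {k | η ≤ ‖A (z k)‖ + ‖z k‖} with hI1
      set I2 : Set ℕ := {k | ¬ η ≤ ‖A (z k)‖ + ‖z k‖ ∧ σz k ≤ ‖z k‖} with hI2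
      set I3 : Set ℕ := {k | ¬ η ≤ ‖A (z k)‖ + ‖z k‖ ∧ ‖z k‖ < σz k} with hI3
      have hunion : I1 ∪ I2 ∪ I3 = Set.univ := by
        ext k
        simp only [Set.mem_union, Set.mem_setOf_eq, Set.mem_univ, iff_true, hI1, hI2, hI3]
        by_cases h : η ≤ ‖A (z k)‖ + ‖z k‖
        · exact Or.inl (Or.inl h)
        · rcases le_or_gt (σz k) ‖z k‖ with h2 | h2
          · exact Or.inl (Or.inr ⟨h, h2⟩)
          · exact Or.inr ⟨h, h2⟩
      have hone : I1.Infinite ∨ I2.Infinite ∨ I3.Infinite := by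
        by_contra hno
        push_neg at hno
        have : (I1 ∪ I2 ∪ I3).Finite := (hno.1.union hno.2.1).union hno.2.2
        rw [hunion] at this
        exact Set.infinite_univ this
      rcases hone with hinf | hinf | hinf
      · -- on I1 the min is η, so σz → 0
        refine caseS I1 hinf ?_
        have h8 : Tendsto (fun k => min η (‖A (z k)‖ + ‖z k‖) * σz k) (atTop ⊓ 𝓟 I1) (𝓝 0) :=
          hmin0.mono_left inf_le_left
        have h10 : Tendsto (fun k => η⁻¹ * (min η (‖A (z k)‖ + ‖z k‖) * σz k))
            (atTop ⊓ 𝓟 I1) (𝓝 (η⁻¹ * 0)) := h8.const_mul η⁻¹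
        rw [mul_zero] at h10
        refine squeeze_zero' (Eventually.of_forall fun k => (hσzpos k).le) ?_ h10
        rw [eventually_inf_principal]
        refine Eventually.of_forall fun k hk => ?_
        have h9 : min η (‖A (z k)‖ + ‖z k‖) = η := min_eq_left hk
        rw [h9, inv_mul_cancel_left₀ hηpos.ne']
      · -- on I2, σz^2 ≤ min * σz, so σz → 0
        refine caseS I2 hinf ?_
        have h8 : Tendsto (fun k => min η (‖A (z k)‖ + ‖z k‖) * σz k) (atTop ⊓ 𝓟 I2)
            (𝓝 0) := hmin0.mono_left inf_le_left
        have h9 : Tendsto (fun k => Real.sqrt (min η (‖A (z k)‖ + ‖z k‖) * σz k))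
            (atTop ⊓ 𝓟 I2) (𝓝 0) := by
          simpa [Function.comp_def] using (Real.continuous_sqrt.tendsto 0).comp h8
        refine squeeze_zero' (Eventually.of_forall fun k => (hσzpos k).le) ?_ h9
        rw [eventually_inf_principal]
        refine Eventually.of_forall fun k hk => ?_
        have hmineq : min η (‖A (z k)‖ + ‖z k‖) = ‖A (z k)‖ + ‖z k‖ :=
          min_eq_right (le_of_not_ge hk.1)
        have hsq : σz k ^ 2 ≤ min η (‖A (z k)‖ + ‖z k‖) * σz k := by
          rw [hmineq]
          nlinarith [mul_le_mul_of_nonneg_right hk.2 (hσzpos k).le,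
            mul_nonneg (norm_nonneg (A (z k))) (hσzpos k).le]
        calc σz k = Real.sqrt (σz k ^ 2) := (Real.sqrt_sq (hσzpos k).le).symm
          _ ≤ _ := Real.sqrt_le_sqrt hsq
      · -- on I3, ‖z‖ → 0 and ‖A z‖ → 0 strongly
        set F := atTop ⊓ 𝓟 I3 with hF
        haveI hne3 : F.NeBot := hneS I3 hinf
        have h8 : Tendsto (fun k => min η (‖A (z k)‖ + ‖z k‖) * σz k) F (𝓝 0) :=
          hmin0.mono_left inf_le_left
        have h9 : Tendsto (fun k => Real.sqrt (min η (‖A (z k)‖ + ‖z k‖) * σz k)) F (𝓝 0) := by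
          simpa [Function.comp_def] using (Real.continuous_sqrt.tendsto 0).comp h8
        have hz0 : Tendsto (fun k => ‖z k‖) F (𝓝 0) := by
          refine squeeze_zero' (Eventually.of_forall fun k => norm_nonneg _) ?_ h9
          rw [hF, eventually_inf_principal]
          refine Eventually.of_forall fun k hk => ?_
          have hmineq : min η (‖A (z k)‖ + ‖z k‖) = ‖A (z k)‖ + ‖z k‖ :=
            min_eq_right (le_of_not_ge hk.1)
          have hsq : ‖z k‖ ^ 2 ≤ min η (‖A (z k)‖ + ‖z k‖) * σz k := by
            rw [hmineq]
            nlinarith [mul_le_mul_of_nonneg_left hk.2.le (norm_nonneg (z k)),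
              mul_nonneg (norm_nonneg (A (z k))) (hσzpos k).le,
              mul_le_mul_of_nonneg_right (le_add_of_nonneg_left (norm_nonneg (A (z k)))
                : ‖z k‖ ≤ ‖A (z k)‖ + ‖z k‖) (hσzpos k).le]
          calc ‖z k‖ = Real.sqrt (‖z k‖ ^ 2) := (Real.sqrt_sq (norm_nonneg (z k))).symm
            _ ≤ _ := Real.sqrt_le_sqrt hsq
        have hAz0 : Tendsto (fun k => ‖A (z k)‖) F (𝓝 0) := by
          refine squeeze_zero' (Eventually.of_forall fun k => norm_nonneg _) ?_ h9
          rw [hF, eventually_inf_principal]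
          refine Eventually.of_forall fun k hk => ?_
          have hmineq : min η (‖A (z k)‖ + ‖z k‖) = ‖A (z k)‖ + ‖z k‖ :=
            min_eq_right (le_of_not_ge hk.1)
          have hsq : ‖A (z k)‖ ^ 2 ≤ min η (‖A (z k)‖ + ‖z k‖) * σz k := by
            rw [hmineq]
            nlinarith [mul_le_mul_of_nonneg_left (hAzn k) (norm_nonneg (A (z k))),
              mul_nonneg (norm_nonneg (z k)) (hσzpos k).le]
          calc ‖A (z k)‖ = Real.sqrt (‖A (z k)‖ ^ 2) :=
              (Real.sqrt_sq (norm_nonneg (A (z k)))).symm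
            _ ≤ _ := Real.sqrt_le_sqrt hsq
        have hzstrong : Tendsto z F (𝓝 (0 : H)) := tendsto_zero_iff_norm_tendsto_zero.mpr hz0
        have hzw0 : Tendsto (fun k => toWeakSpaceCLM ℝ H (z k)) F (𝓝 (0 : WeakSpace ℝ H)) := by
          have h10 := ((toWeakSpaceCLM ℝ H).continuous.tendsto (0 : H)).comp hzstrong
          simpa [Function.comp_def] using h10
        exact finish F hne3 inf_le_left hAz0 hzw0

    refine ⟨yl, cl, ⟨hc0.trans (hcle 0), fun y' c' _ => (hwd y' c').trans hMPle⟩, hty, htc⟩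
  constructor
  · intro hP _ hb
    exact key hP hb
  · intro hP _ hΓ hMσe hMze hSD
    obtain ⟨R, hRpos, hΓ0⟩ := hΓ
    obtain ⟨Mσ, hMσ⟩ := hMσe
    obtain ⟨Mz, hMz⟩ := hMze
    obtain ⟨yb, cb, hcb0, hDSle⟩ := hSD
    have hqb_bot : dualq f σ A yb cb ≠ ⊥ := by
      intro h
      exact hq0 (le_bot_iff.mp (h ▸ hDSle (y 0) (c 0) hc0))
    have hqb_top : dualq f σ A yb cb ≠ ⊤ := ((hwd yb cb).trans_lt hMPtop).ne
    set qb : ℝ := (dualq f σ A yb cb).toReal with hqb_def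
    have hqb : dualq f σ A yb cb = ((qb : ℝ) : EReal) :=
      (EReal.coe_toReal hqb_top hqb_bot).symm
    have hqble : ∀ k, qb ≤ fk k - inner ℝ (A (z k)) yb + cb * σz k := by
      intro k
      have h1 := aux_dualq_le f σ A yb cb (x k) (z k)
      rw [hqb, hlagrc k yb cb] at h1
      exact_mod_cast h1
    have hqkb : ∀ k, qk k ≤ qb := by
      intro k
      have h1 := hDSle (y k) (c k) (hcpos k)
      rw [hqb, hqk k] at h1
      exact_mod_cast h1
    have h4 : ∀ k, (c k - cb - R) * σz k ≤ inner ℝ (A (z k)) (y k - yb) := by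
      intro k
      have hil : (inner ℝ (A (z k)) (y k - yb) : ℝ)
          = inner ℝ (A (z k)) (y k) - inner ℝ (A (z k)) yb := inner_sub_right _ _ _
      have h1 := hqble k
      have h2 := hxzr k
      have h3 := hqkb k
      have h5 := hΓ0 k
      nlinarith [hσzpos k]
    have h5 : ∀ k, ‖y (k + 1) - yb‖ ^ 2 = ‖y k - yb‖ ^ 2
        - 2 * (st k * inner ℝ (A (z k)) (y k - yb)) + st k ^ 2 * ‖A (z k)‖ ^ 2 := by
      intro k
      have hrw : y (k + 1) - yb = (y k - yb) - st k • A (z k) := by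
        rw [hy k]; abel
      rw [hrw, norm_sub_sq_real, real_inner_smul_right, real_inner_comm, norm_smul,
        Real.norm_eq_abs, abs_of_pos (hst k), mul_pow]
    set B : ℝ := max βs (Mσ + Mz) with hB_def
    have hBst : ∀ k, st k ≤ B := fun k =>
      (hstep k).2.trans (max_le_max le_rfl (add_le_add (hMσ k) (hMz k)))
    have hBpos : 0 < B := lt_of_lt_of_le (hηpos.trans hηβ) (le_max_left _ _)
    have hMσpos : 0 < Mσ := (hσzpos 0).trans_le (hMσ 0)
    have h6 : ∀ k, st k ^ 2 * ‖A (z k)‖ ^ 2 ≤ (B * Mσ) * (st k * σz k) := by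
      intro k
      have h7 : st k * ‖A (z k)‖ ≤ st k * σz k :=
        mul_le_mul_of_nonneg_left (hAzn k) (hst k).le
      have h8 : st k * ‖A (z k)‖ ≤ B * Mσ :=
        mul_le_mul (hBst k) ((hAzn k).trans (hMσ k)) (norm_nonneg _) hBpos.le
      nlinarith [mul_nonneg (hst k).le (norm_nonneg (A (z k)))]
    set C1 : ℝ := 2 * (cb + R) + B * Mσ with hC1_def
    have hrec : ∀ k, ‖y (k + 1) - yb‖ ^ 2
        ≤ ‖y k - yb‖ ^ 2 + (C1 - 2 * c k) * (st k * σz k) := by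
      intro k
      have h7 := mul_le_mul_of_nonneg_left (h4 k) (hst k).le
      have h8 := h5 k
      have h9 := h6 k
      rw [hC1_def]
      nlinarith
    have hcbdd : BddAbove (Set.range c) := by
      by_contra hnb
      have hctop : Tendsto c atTop atTop := tendsto_atTop_atTop_of_monotone' hcmono hnb
      obtain ⟨N, hN⟩ := eventually_atTop.mp (hctop.eventually_ge_atTop ((C1 + 2) / 2))
      have hdec : ∀ k, N ≤ k →
          ‖y (k + 1) - yb‖ ^ 2 ≤ ‖y k - yb‖ ^ 2 - 2 * (st k * σz k) := by
        intro k hk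
        have h7 := hrec k
        have h8 := hN k hk
        nlinarith [mul_pos (hst k) (hσzpos k)]
      have hsum2 : ∀ K, ‖y (N + K) - yb‖ ^ 2
          + 2 * ∑ j ∈ Finset.range K, (st (N + j) * σz (N + j)) ≤ ‖y N - yb‖ ^ 2 := by
        intro K
        induction K with
        | zero => simp
        | succ m ih =>
          have h7 := hdec (N + m) (Nat.le_add_right N m)
          rw [Finset.sum_range_succ]
          have : N + (m + 1) = (N + m) + 1 := by ring
          rw [this]
          linarith
      have hsum3 : ∀ K, ∑ j ∈ Finset.range K, (st (N + j) * σz (N + j))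
          ≤ ‖y N - yb‖ ^ 2 / 2 := by
        intro K
        have h7 := hsum2 K
        nlinarith [sq_nonneg ‖y (N + K) - yb‖]
      have hcb2 : ∀ K, c (N + K) ≤ c N + (abar + 1) * (‖y N - yb‖ ^ 2 / 2) := by
        intro K
        have h9 : c (N + K) - c N
            = ∑ j ∈ Finset.range K, ((a (N + j) + 1) * st (N + j) * σz (N + j)) := by
          have h10 : ∑ j ∈ Finset.range K, (c (N + (j + 1)) - c (N + j))
              = c (N + K) - c (N + 0) := Finset.sum_range_sub (fun j => c (N + j)) K
          rw [Nat.add_zero] at h10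
          rw [← h10]
          apply Finset.sum_congr rfl
          intro j _
          have : N + (j + 1) = (N + j) + 1 := by ring
          rw [this, hc (N + j)]
          ring
        have h11 : ∑ j ∈ Finset.range K, ((a (N + j) + 1) * st (N + j) * σz (N + j))
            ≤ (abar + 1) * ∑ j ∈ Finset.range K, (st (N + j) * σz (N + j)) := by
          rw [Finset.mul_sum]
          apply Finset.sum_le_sum
          intro j _
          have := (ha (N + j)).2
          nlinarith [mul_pos (hst (N + j)) (hσzpos (N + j))]
        have h12 : (abar + 1) * ∑ j ∈ Finset.range K, (st (N + j) * σz (N + j))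
            ≤ (abar + 1) * (‖y N - yb‖ ^ 2 / 2) :=
          mul_le_mul_of_nonneg_left (hsum3 K) (by linarith)
        linarith
      apply hnb
      refine ⟨c N + (abar + 1) * (‖y N - yb‖ ^ 2 / 2), ?_⟩
      rintro _ ⟨k, rfl⟩
      rcases le_or_gt k N with hk | hk
      · have := hcmono hk
        have h13 := hcb2 0
        simp at h13
        nlinarith [sq_nonneg ‖y N - yb‖]
      · obtain ⟨m, rfl⟩ := Nat.exists_eq_add_of_le hk.le
        exact hcb2 m
    obtain ⟨Mc, hMc⟩ := hcbdd
    have hMc' : ∀ k, c k ≤ Mc := fun k => hMc ⟨k, rfl⟩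
    have htle : ∀ K, ∑ j ∈ Finset.range K, (st j * σz j) ≤ Mc - c 0 := by
      intro K
      have h1 : ∑ j ∈ Finset.range K, (st j * σz j)
          ≤ ∑ j ∈ Finset.range K, (c (j + 1) - c j) := by
        apply Finset.sum_le_sum
        intro j _
        rw [hc j]
        nlinarith [mul_pos (hst j) (hσzpos j), (ha j).1]
      rw [Finset.sum_range_sub c] at h1
      linarith [hMc' K]
    have hy2 : ∀ K, ‖y K - yb‖ ^ 2
        ≤ ‖y 0 - yb‖ ^ 2 + |C1| * ∑ j ∈ Finset.range K, (st j * σz j) := by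
      intro K
      induction K with
      | zero => simp
      | succ m ih =>
        have h7 := hrec m
        rw [Finset.sum_range_succ]
        have h8 : (C1 - 2 * c m) * (st m * σz m) ≤ |C1| * (st m * σz m) := by
          apply mul_le_mul_of_nonneg_right _ (mul_pos (hst m) (hσzpos m)).le
          have := hcpos m
          have := le_abs_self C1
          linarith
        linarith
    set D : ℝ := ‖y 0 - yb‖ ^ 2 + |C1| * (Mc - c 0) with hD_def
    have hyD : ∀ k, ‖y k - yb‖ ^ 2 ≤ D := by
      intro k
      have h1 := hy2 k
      have h2 := htle k
      have h3 : |C1| * ∑ j ∈ Finset.range k, (st j * σz j) ≤ |C1| * (Mc - c 0) :=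
        mul_le_mul_of_nonneg_left h2 (abs_nonneg C1)
      rw [hD_def]
      linarith
    have hD0 : 0 ≤ D := le_trans (sq_nonneg ‖y 0 - yb‖) (hyD 0)
    have hyb2 : ∀ k, ‖y k‖ ≤ ‖yb‖ + Real.sqrt D := by
      intro k
      have h1 : ‖y k - yb‖ ≤ Real.sqrt D := by
        rw [← Real.sqrt_sq (norm_nonneg (y k - yb))]
        exact Real.sqrt_le_sqrt (hyD k)
      have h2 : ‖y k‖ ≤ ‖y k - yb‖ + ‖yb‖ := by
        calc ‖y k‖ = ‖(y k - yb) + yb‖ := by rw [sub_add_cancel]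
          _ ≤ ‖y k - yb‖ + ‖yb‖ := norm_add_le _ _
      linarith
    refine key hP ⟨‖yb‖ + Real.sqrt D + (|c 0| + |Mc|), fun k => ?_⟩
    have h1 : |c k| ≤ |c 0| + |Mc| := by
      rw [abs_le]
      constructor
      · have h2 : -(|c 0|) ≤ c 0 := neg_abs_le (c 0)
        have h3 := hcmono (Nat.zero_le k)
        have h4 := abs_nonneg Mc
        linarith
      · have h2 := (hMc' k).trans (le_abs_self Mc)
        have h3 := abs_nonneg (c 0)
        linarith
    linarith [hyb2 k]
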